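/- Let R be a commutative ring, a, b ∈ R[X] with a monic of degree m ≥ 1 and b of formal degree n ≥ 1 with formal leading coefficient a unit, such that s·a + t·b = 1 for some s, t ∈ R[X]. Then s and t can be chosen with deg t < m and deg s < n. -/

import Mathlib

open Polynomial

theorem bezout_degree_reduction {R : Type*} [CommRing R] (a b : R[X]) (m n : ℕ)
    (hm : 1 ≤ m) (hn : 1 ≤ n) (ha : a.Monic) (hadeg : a.natDegree = m)
    (hb : b.degree ≤ (n : ℕ)) (hbu : IsUnit (b.coeff n))
    (h : ∃ s t : R[X], s * a + t * b = 1) :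
    ∃ s t : R[X], s * a + t * b = 1 ∧ t.degree < (m : ℕ) ∧ s.degree < (n : ℕ) := by
  rcases subsingleton_or_nontrivial R with hR | hR
  · exact ⟨0, 0, Subsingleton.elim _ _, by rw [degree_zero]; exact WithBot.bot_lt_coe m, by rw [degree_zero]; exact WithBot.bot_lt_coe n⟩
  obtain ⟨s, t, hst⟩ := h
  have hadeg' : a.degree = (m : ℕ) := by rw [degree_eq_natDegree ha.ne_zero, hadeg]
  set r := t %ₘ a with hr
  set s' := s + (t /ₘ a) * b with hs'
  have hrdeg : r.degree < (m : ℕ) := hadeg' ▸ degree_modByMonic_lt t ha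
  have key : s' * a + r * b = 1 := by
    have hdiv := modByMonic_add_div t a
    linear_combination hst + b * hdiv
  refine ⟨s', r, key, hrdeg, ?_⟩
  have h1 : (s' * a).degree = s'.degree + (m : ℕ) := by
    rw [ha.degree_mul, hadeg']
  have h2 : (s' * a).degree < (n : ℕ) + (m : ℕ) := by
    have hsa : s' * a = 1 - r * b := by linear_combination key
    rw [hsa]
    apply lt_of_le_of_lt (degree_sub_le _ _)
    rw [max_lt_iff]
    constructor
    · apply lt_of_le_of_lt degree_one_le
      exact_mod_cast by positivity
    · apply lt_of_le_of_lt (degree_mul_le _ _)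
      calc r.degree + b.degree ≤ r.degree + (n : ℕ) := add_le_add le_rfl hb
        _ < (m : ℕ) + (n : ℕ) := by
            exact WithBot.add_lt_add_right (by exact_mod_cast WithBot.coe_ne_bot) hrdeg
        _ = (n : ℕ) + (m : ℕ) := by rw [add_comm]
  rw [h1] at h2
  exact lt_of_add_lt_add_right h2
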